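/- Let f : ℝ^{n×p} → ℝ be differentiable and let M > 0 be a constant such that ‖∇f(X)‖_F ≤ M for every X in the region R = {X ∈ ℝ^{n×p} : ‖XᵀX − I_p‖_F ≤ 1/6}. If the penalty parameter β satisfies β ≥ (6 + 21M)/5, then for every X ∈ R it holds that ‖H(X)‖_F² ≥ ‖G(X)‖_F² + β‖XᵀX − I_p‖_F². -/

import Mathlib

open Matrix BigOperators Finset Kronecker

/- Equip matrix spaces with the Frobenius norm (finite-dimensional, so the resulting calculus
notions such as `fderiv`/`Differentiable` are norm-independent). -/
attribute [local instance] Matrix.frobeniusNormedAddCommGroup Matrix.frobeniusNormedSpace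

/-- The Frobenius norm of a real matrix. -/
noncomputable def frob {m k : Type*} [Fintype m] [Fintype k] (A : Matrix m k ℝ) : ℝ :=
  Real.sqrt (∑ i, ∑ j, (A i j) ^ 2)

/-- The trace inner product ⟨A, B⟩ = tr(AᵀB) of real matrices. -/
noncomputable def minner {m k : Type*} [Fintype m] [Fintype k] (A B : Matrix m k ℝ) : ℝ :=
  (Aᵀ * B).trace

/-- The symmetric part sym(B) = (B + Bᵀ)/2 of a square matrix. -/
noncomputable def symPart {k : Type*} (B : Matrix k k ℝ) : Matrix k k ℝ :=
  (1 / 2 : ℝ) • (B + Bᵀ)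

/-- The generalized Riemannian gradient G(X) = ∇f(X)((3/2)I - (1/2)XᵀX) - X·sym(Xᵀ∇f(X)),
expressed in terms of the Euclidean gradient matrix `Gf = ∇f(X)`. -/
noncomputable def Gdir {n p : ℕ} (Gf X : Matrix (Fin n) (Fin p) ℝ) :
    Matrix (Fin n) (Fin p) ℝ :=
  Gf * ((3 / 2 : ℝ) • (1 : Matrix (Fin p) (Fin p) ℝ) - (1 / 2 : ℝ) • (Xᵀ * X))
    - X * symPart (Xᵀ * Gf)

/-- The feasibility direction E(X) = X(XᵀX - I). -/
noncomputable def Edir {n p : ℕ} (X : Matrix (Fin n) (Fin p) ℝ) :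
    Matrix (Fin n) (Fin p) ℝ :=
  X * (Xᵀ * X - 1)

/-- The spectral norm (largest singular value) of a real matrix, as the operator norm of the
associated Euclidean linear map. -/
noncomputable def specNorm {m k : Type*} [Fintype m] [Fintype k] [DecidableEq k]
    (A : Matrix m k ℝ) : ℝ :=
  ‖LinearMap.toContinuousLinearMap (Matrix.toEuclideanLin A)‖

/-- The smallest singular value of a real matrix: the square root of the smallest eigenvalue
of AᵀA (= AᴴA over ℝ). -/
noncomputable def sigmaMin {m k : Type*} [Fintype m] [Fintype k] [DecidableEq m] [DecidableEq k]
    (A : Matrix m k ℝ) : ℝ :=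
  Real.sqrt (⨅ i, (show (Aᵀ * A).IsHermitian by
    simpa [Matrix.conjTranspose_eq_transpose_of_trivial] using
      Matrix.isHermitian_conjTranspose_mul_self A).eigenvalues i)

section helpers
variable {m k l : Type*} [Fintype m] [Fintype k] [Fintype l]

lemma frob_nonneg (A : Matrix m k ℝ) : 0 ≤ frob A := Real.sqrt_nonneg _

lemma frob_sq (A : Matrix m k ℝ) : frob A ^ 2 = ∑ i, ∑ j, (A i j) ^ 2 :=
  Real.sq_sqrt (by positivity)

lemma minner_eq_sum (A B : Matrix m k ℝ) : minner A B = ∑ i, ∑ j, A i j * B i j := by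
  simp only [minner, Matrix.trace, Matrix.diag, Matrix.mul_apply, Matrix.transpose_apply]
  rw [Finset.sum_comm]

lemma minner_self (A : Matrix m k ℝ) : minner A A = frob A ^ 2 := by
  rw [minner_eq_sum, frob_sq]; simp [sq]

lemma minner_comm (A B : Matrix m k ℝ) : minner A B = minner B A := by
  rw [minner_eq_sum, minner_eq_sum]
  exact Finset.sum_congr rfl fun i _ => Finset.sum_congr rfl fun j _ => mul_comm _ _

lemma minner_sq_le (A B : Matrix m k ℝ) : minner A B ^ 2 ≤ frob A ^ 2 * frob B ^ 2 := by
  rw [minner_eq_sum, frob_sq, frob_sq]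
  have := Finset.sum_mul_sq_le_sq_mul_sq (Finset.univ ×ˢ Finset.univ)
    (fun q : m × k => A q.1 q.2) (fun q : m × k => B q.1 q.2)
  rw [Finset.univ_product_univ] at this
  rw [Fintype.sum_prod_type, Fintype.sum_prod_type, Fintype.sum_prod_type] at this
  exact this

lemma abs_minner_le (A B : Matrix m k ℝ) : |minner A B| ≤ frob A * frob B := by
  have h := minner_sq_le A B
  have ha := frob_nonneg A
  have hb := frob_nonneg B
  rw [abs_le]
  constructor <;> nlinarith [mul_nonneg ha hb]

lemma frob_mul_le (A : Matrix m k ℝ) (B : Matrix k l ℝ) : frob (A * B) ≤ frob A * frob B := by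
  have h1 : frob (A * B) ^ 2 ≤ (frob A * frob B) ^ 2 := by
    rw [frob_sq, mul_pow, frob_sq, frob_sq]
    calc ∑ i, ∑ j, ((A * B) i j) ^ 2
        ≤ ∑ i, ∑ j, (∑ x, A i x ^ 2) * (∑ x, B x j ^ 2) := by
          refine Finset.sum_le_sum fun i _ => Finset.sum_le_sum fun j _ => ?_
          rw [Matrix.mul_apply]
          exact Finset.sum_mul_sq_le_sq_mul_sq _ _ _
      _ = ∑ i, (∑ x, A i x ^ 2) * (∑ x, ∑ j, B x j ^ 2) := by
          refine Finset.sum_congr rfl fun i _ => ?_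
          rw [← Finset.mul_sum]
          congr 1
          exact Finset.sum_comm
      _ = (∑ i, ∑ x, A i x ^ 2) * (∑ x, ∑ j, B x j ^ 2) := by
          rw [← Finset.sum_mul]
  nlinarith [frob_nonneg (A * B), mul_nonneg (frob_nonneg A) (frob_nonneg B)]

lemma minner_add_right (A B C : Matrix m k ℝ) :
    minner A (B + C) = minner A B + minner A C := by
  simp [minner, Matrix.mul_add]

lemma minner_smul_right (c : ℝ) (A B : Matrix m k ℝ) :
    minner A (c • B) = c * minner A B := by
  simp [minner, Matrix.mul_smul]

lemma minner_add_left (A B C : Matrix m k ℝ) :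
    minner (A + B) C = minner A C + minner B C := by
  rw [minner_comm, minner_add_right, minner_comm, minner_comm C B]

lemma minner_sub_left (A B C : Matrix m k ℝ) :
    minner (A - B) C = minner A C - minner B C := by
  simp [minner, Matrix.transpose_sub, Matrix.sub_mul]

lemma minner_smul_left (c : ℝ) (A B : Matrix m k ℝ) :
    minner (c • A) B = c * minner A B := by
  rw [minner_comm, minner_smul_right, minner_comm]

lemma trace_mul_symm (A B : Matrix k k ℝ) (hB : Bᵀ = B) :
    (A * B).trace = (Aᵀ * B).trace := by
  conv_lhs => rw [← Matrix.trace_transpose, Matrix.transpose_mul, hB, Matrix.trace_mul_comm]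

end helpers

set_option maxHeartbeats 1000000 in
/-- Lemma `le:expen` of the paper. If `f` is differentiable with gradient `gradf`,
`‖∇f(X)‖_F ≤ M` on the region `R = {X : ‖XᵀX - I‖_F ≤ 1/6}`, and `β ≥ (6 + 21M)/5`, then for
every `X ∈ R`, `‖H(X)‖_F² ≥ ‖G(X)‖_F² + β‖XᵀX - I‖_F²`, where `H(X) = G(X) + βE(X)`. -/
theorem stmt0 {n p : ℕ} (f : Matrix (Fin n) (Fin p) ℝ → ℝ)
    (hf : Differentiable ℝ f)
    (gradf : Matrix (Fin n) (Fin p) ℝ → Matrix (Fin n) (Fin p) ℝ)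
    (hgrad : ∀ X V, fderiv ℝ f X V = minner (gradf X) V)
    (M : ℝ) (hM : 0 < M)
    (hbound : ∀ X : Matrix (Fin n) (Fin p) ℝ, frob (Xᵀ * X - 1) ≤ 1 / 6 → frob (gradf X) ≤ M)
    (β : ℝ) (hβ : (6 + 21 * M) / 5 ≤ β)
    (X : Matrix (Fin n) (Fin p) ℝ) (hX : frob (Xᵀ * X - 1) ≤ 1 / 6) :
    frob (Gdir (gradf X) X) ^ 2 + β * frob (Xᵀ * X - 1) ^ 2
      ≤ frob (Gdir (gradf X) X + β • Edir X) ^ 2 := by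
  set Gf := gradf X with hGf
  set D : Matrix (Fin p) (Fin p) ℝ := Xᵀ * X - 1 with hD
  set A : Matrix (Fin p) (Fin p) ℝ := Xᵀ * Gf with hA
  set S : Matrix (Fin p) (Fin p) ℝ := symPart (Xᵀ * Gf) with hS
  set G : Matrix (Fin n) (Fin p) ℝ := Gdir Gf X with hG
  set E : Matrix (Fin n) (Fin p) ℝ := Edir X with hE
  set d : ℝ := frob D with hd
  have hd0 : 0 ≤ d := frob_nonneg D
  have hd6 : d ≤ 1 / 6 := hX
  have hgM : frob Gf ≤ M := hbound X hX
  have hDT : Dᵀ = D := by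
    rw [hD]
    simp [Matrix.transpose_sub, Matrix.transpose_mul]
  have hXTX : Xᵀ * X = D + 1 := by rw [hD, sub_add_cancel]
  have hDDT : (D * D)ᵀ = D * D := by rw [Matrix.transpose_mul, hDT]
  have hGexp : G = Gf - (1 / 2 : ℝ) • (Gf * D) - X * S := by
    rw [hG, Gdir]
    congr 1
    have h1 : (3 / 2 : ℝ) • (1 : Matrix (Fin p) (Fin p) ℝ) - (1 / 2 : ℝ) • (Xᵀ * X)
        = 1 - (1 / 2 : ℝ) • D := by
      rw [hD]; module
    rw [h1, Matrix.mul_sub, Matrix.mul_one, Matrix.mul_smul]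
  have key : ∀ P Q : Matrix (Fin p) (Fin p) ℝ,
      minner (X * P) (X * Q) = minner P ((D + 1) * Q) := by
    intro P Q
    unfold minner
    rw [Matrix.transpose_mul, Matrix.mul_assoc, ← Matrix.mul_assoc Xᵀ X Q, hXTX]
  have keyG : ∀ N : Matrix (Fin p) (Fin p) ℝ,
      minner Gf (X * N) = (Aᵀ * N).trace := by
    intro N
    unfold minner
    rw [hA, Matrix.transpose_mul, Matrix.transpose_transpose, ← Matrix.mul_assoc]
  have hST : Sᵀ = S := by
    rw [hS, symPart]
    simp [Matrix.transpose_smul, Matrix.transpose_add, add_comm]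
  have hSsym : ∀ N : Matrix (Fin p) (Fin p) ℝ, Nᵀ = N → (S * N).trace = (Aᵀ * N).trace := by
    intro N hN
    rw [hS, symPart, ← hA, Matrix.smul_mul, Matrix.trace_smul, Matrix.add_mul,
      Matrix.trace_add, trace_mul_symm A N hN]
    simp
    ring
  have hEXD : E = X * D := by rw [hE, Edir, hD]
  -- the main inner product identity
  have hGE : minner G E = -(3 / 2) * (Aᵀ * (D * D)).trace := by
    rw [hGexp, hEXD, minner_sub_left, minner_sub_left, minner_smul_left]
    have t1 : minner (Gf * D) (X * D) = (Aᵀ * (D * D)).trace :=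
      calc minner (Gf * D) (X * D) = ((D * Gfᵀ) * (X * D)).trace := by
            rw [minner, Matrix.transpose_mul, hDT]
        _ = ((Gfᵀ * (X * D)) * D).trace := by
            rw [Matrix.mul_assoc, Matrix.trace_mul_comm]
        _ = (Aᵀ * (D * D)).trace := by
            rw [hA, Matrix.transpose_mul, Matrix.transpose_transpose]
            simp only [Matrix.mul_assoc]
    have t2 : minner (X * S) (X * D) = (Aᵀ * (D * D)).trace + (Aᵀ * D).trace := by
      rw [key, Matrix.add_mul, Matrix.one_mul, minner_add_right]
      have mS : ∀ N : Matrix (Fin p) (Fin p) ℝ, minner S N = (S * N).trace := by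
        intro N; rw [minner, hST]
      rw [mS, mS, hSsym _ hDDT, hSsym _ hDT]
    rw [keyG, t1, t2]
    ring
  -- bound on the remaining trace term
  have hDD : frob (D * D) ≤ d * d := frob_mul_le D D
  have hDD0 : 0 ≤ frob (D * D) := frob_nonneg _
  have hXDD : frob (X * (D * D)) ≤ (7 / 6) * d ^ 2 := by
    have h1 : frob (X * (D * D)) ^ 2
        = minner (D * D) (D * (D * D)) + frob (D * D) ^ 2 := by
      rw [← minner_self, key, Matrix.add_mul, Matrix.one_mul, minner_add_right, minner_self]
    have h2 : |minner (D * D) (D * (D * D))| ≤ frob (D * D) * (d * frob (D * D)) := by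
      refine le_trans (abs_minner_le _ _) ?_
      exact mul_le_mul_of_nonneg_left (frob_mul_le D (D * D)) hDD0
    have h3 := abs_le.mp h2
    have h4 : frob (X * (D * D)) ^ 2 ≤ ((7 / 6) * d ^ 2) ^ 2 := by
      rw [h1]; nlinarith
    nlinarith [frob_nonneg (X * (D * D)), sq_nonneg d]
  have habs : |(Aᵀ * (D * D)).trace| ≤ M * ((7 / 6) * d ^ 2) := by
    rw [← keyG]
    refine le_trans (abs_minner_le _ _) ?_
    have := mul_le_mul hgM hXDD (frob_nonneg _) hM.le
    linarith
  have hGE' : -(7 / 4) * M * d ^ 2 ≤ minner G E := by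
    rw [hGE]
    have := (abs_le.mp habs).2
    linarith
  -- lower bound for ‖E‖²
  have hE2 : (5 / 6) * d ^ 2 ≤ frob E ^ 2 := by
    have h1 : frob E ^ 2 = minner D (D * D) + d ^ 2 := by
      rw [← minner_self, hEXD, key, Matrix.add_mul, Matrix.one_mul, minner_add_right,
        minner_self, ← hd]
    have h2 : |minner D (D * D)| ≤ d * (d * d) := by
      refine le_trans (abs_minner_le _ _) ?_
      exact mul_le_mul_of_nonneg_left hDD hd0
    have h3 := abs_le.mp h2
    rw [h1]; nlinarith
  -- expansion of the squared norm
  have hexpand : frob (G + β • E) ^ 2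
      = frob G ^ 2 + 2 * β * minner G E + β ^ 2 * frob E ^ 2 := by
    rw [← minner_self, minner_add_left, minner_add_right, minner_add_right,
      minner_smul_left, minner_smul_left, minner_smul_right, minner_smul_right,
      minner_self, minner_self, minner_comm E G]
    ring
  have hβpos : 0 < β := by nlinarith
  have key1 : 0 ≤ β * d ^ 2 * (β * (5 / 6) - 1 - (7 / 2) * M) := by
    apply mul_nonneg (mul_nonneg hβpos.le (sq_nonneg d))
    nlinarith
  have e1 : β ^ 2 * ((5 / 6) * d ^ 2) ≤ β ^ 2 * frob E ^ 2 :=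
    mul_le_mul_of_nonneg_left hE2 (sq_nonneg β)
  have e2 : 2 * β * (-(7 / 4) * M * d ^ 2) ≤ 2 * β * minner G E :=
    mul_le_mul_of_nonneg_left hGE' (by linarith)
  rw [hexpand]
  nlinarith [key1, e1, e2]
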